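/- Let p ≥ 5 be a prime and let q ≥ 2 be an integer. Then d(pq + 1, p, (p−1)/2) = q/4. -/
import Mathlib


/-- Ozsváth–Szabó's recursive formula for the correction terms (d-invariants)
`d(L(p,q), i)` of lens spaces: `d(p, 0, i) = 0` and, for `q ≥ 1`,
`d(p, q, i) = -1/4 + (2i + 1 - p - q)^2 / (4pq) - d(q, p mod q, i mod q)`. -/
def lensD (p q i : ℕ) : ℚ :=
  if h : q = 0 then 0
  else -1/4 + ((2 * i + 1 - p - q : ℚ)) ^ 2 / (4 * p * q)
       - lensD q (p % q) (i % q)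
termination_by q
decreasing_by exact Nat.mod_lt _ (Nat.pos_of_ne_zero h)

/-- For `p ≥ 5` prime and `q ≥ 2`, `d(pq + 1, p, (p-1)/2) = q/4`. -/
theorem lensD_pq_add_one (p q : ℕ) (hp : p.Prime) (hp5 : 5 ≤ p) (hq : 2 ≤ q) :
    lensD (p * q + 1) p ((p - 1) / 2) = (q : ℚ) / 4 := by
  set i := (p - 1) / 2 with hi
  have hpodd : Odd p := hp.odd_of_ne_two (by omega)
  have h2i : 2 * i + 1 = p := by
    obtain ⟨k, hk⟩ := hpodd
    omega
  have hmod1 : (p * q + 1) % p = 1 := by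
    rw [Nat.mul_add_mod]
    exact Nat.mod_eq_of_lt (by omega)
  have hilt : i % p = i := Nat.mod_eq_of_lt (by omega : i < p)
  rw [lensD, dif_neg (by omega : p ≠ 0), hmod1, hilt,
      lensD, dif_neg (by omega : (1:ℕ) ≠ 0)]
  simp only [Nat.mod_one, dif_pos]
  have hc : (2 * (i : ℚ) + 1) = p := by exact_mod_cast congrArg (Nat.cast : ℕ → ℚ) h2i
  have hp0 : (p : ℚ) ≠ 0 := by positivity
  have hpq0 : ((p : ℚ) * q + 1) ≠ 0 := by positivity
  have h0 : lensD 1 0 0 = 0 := by rw [lensD]; simp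
  rw [h0]
  push_cast
  rw [hc]
  field_simp
  ring
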